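/- Let Y be a weak metric space and X a nondegenerately based topological space. The space E_1(Y,X) is contractible. -/

import Mathlib

open unitInterval Topology

noncomputable section

universe u v

/-! ### Basic configuration/cone sets -/

/-- The configuration set: tuples with pairwise distinct coordinates. -/
def ConfigSet (Z : Type*) (j : ℕ) : Set (Fin j → Z) :=
  {f | Function.Injective f}

/-- `Cone(Y,j)`: tuples of triples `(a,b,y)` with `a < b` and, whenever two triples
carry the same point of `Y`, the corresponding intervals have disjoint interiors. -/
def ConeSet (Y : Type*) (j : ℕ) : Set (Fin j → ℝ × ℝ × Y) :=
  {f | (∀ i, (f i).1 < (f i).2.1) ∧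
    ∀ k l, k ≠ l → (f k).2.2 = (f l).2.2 → (f k).2.1 ≤ (f l).1 ∨ (f l).2.1 ≤ (f k).1}

/-- A weak metric on a space `Y`. -/
structure IsWeakMetric {Y : Type*} [TopologicalSpace Y] (d : Y → Y → ℝ) : Prop where
  continuous : Continuous fun p : Y × Y => d p.1 p.2
  nonneg : ∀ y y', 0 ≤ d y y'
  eq_zero_iff : ∀ y y', d y y' = 0 ↔ y = y'

/-- The auxiliary weak metric `g` on `ℝ × Y`. -/
def gfun {Y : Type*} (d : Y → Y → ℝ) (p q : ℝ × Y) : ℝ :=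
  (1 / 2) * ((|p.1 - q.1| ^ 2 + d p.2 q.2) / (|p.1 - q.1| + d p.2 q.2 + 1))

/-- `v(κ) = min_{k ≠ l} g(κ k, κ l)`. -/
def vfun {Y : Type*} (d : Y → Y → ℝ) {j : ℕ} (κ : Fin j → ℝ × Y) : ℝ :=
  ⨅ p : {p : Fin j × Fin j // p.1 ≠ p.2}, gfun d (κ p.1.1) (κ p.1.2)

/-- `φ_j`: sends each segment to its center point. -/
def centersFun {Y : Type*} {j : ℕ} (κ : Fin j → ℝ × ℝ × Y) : Fin j → ℝ × Y :=
  fun i => (((κ i).1 + (κ i).2.1) / 2, (κ i).2.2)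

/-- `φ̄_j`: thickens each point into an interval of radius `v(κ)`. -/
def phibarFun {Y : Type*} (d : Y → Y → ℝ) {j : ℕ} (κ : Fin j → ℝ × Y) :
    Fin j → ℝ × ℝ × Y :=
  fun i => ((κ i).1 - vfun d κ, (κ i).1 + vfun d κ, (κ i).2)

/-- `shrink_{s,t}`: linearly compress segments from `(0,1)` into `(s,t)`. -/
def shrinkFun {Y : Type*} (s t : ℝ) {j : ℕ} (κ : Fin j → ℝ × ℝ × Y) :
    Fin j → ℝ × ℝ × Y :=
  fun i => (s + (t - s) * (κ i).1, s + (t - s) * (κ i).2.1, (κ i).2.2)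

theorem ConeSet.comp {Y : Type*} {i j : ℕ} {f : Fin j → ℝ × ℝ × Y} (hf : f ∈ ConeSet Y j)
    {ν : Fin i → Fin j} (hν : Function.Injective ν) : (f ∘ ν) ∈ ConeSet Y i :=
  ⟨fun k => hf.1 (ν k), fun k l hkl h => hf.2 (ν k) (ν l) (fun e => hkl (hν e)) h⟩

/-! ### Labeled configuration spaces -/

/-- Generators for the equivalence relation defining `C(Y,X)`. -/
inductive ConfigRel (Y : Type u) (X : Type v) (x₀ : X) :
    (Σ j : ℕ, ↥(ConfigSet Y j) × (Fin j → X)) →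
    (Σ j : ℕ, ↥(ConfigSet Y j) × (Fin j → X)) → Prop
  | mk {i j : ℕ} (ν : Fin i → Fin j) (hν : Function.Injective ν)
      (y : ↥(ConfigSet Y j)) (x : Fin i → X) :
      ConfigRel Y X x₀ ⟨i, ⟨y.1 ∘ ν, y.2.comp hν⟩, x⟩
        ⟨j, y, Function.extend ν x fun _ => x₀⟩

/-- The labeled configuration space `C(Y, X)`. -/
def LabeledConfig (Y : Type u) (X : Type v) (x₀ : X) : Type (max u v) :=
  Quot (ConfigRel Y X x₀)

instance {Y : Type u} {X : Type v} {x₀ : X} [TopologicalSpace Y] [TopologicalSpace X] :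
    TopologicalSpace (LabeledConfig Y X x₀) :=
  inferInstanceAs (TopologicalSpace (Quot (ConfigRel Y X x₀)))

/-- The empty configuration. -/
def emptyConfig (Y : Type u) : ↥(ConfigSet Y 0) :=
  ⟨Fin.elim0, Function.injective_of_subsingleton _⟩

/-- The basepoint of `C(Y,X)`: the empty configuration. -/
def LabeledConfig.base (Y : Type u) (X : Type v) (x₀ : X) : LabeledConfig Y X x₀ :=
  Quot.mk _ ⟨0, emptyConfig Y, Fin.elim0⟩

/-- Generators for the equivalence relation defining `C₁(Y,X)`. -/
inductive Cone1Rel (Y : Type u) (X : Type v) (x₀ : X) :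
    (Σ j : ℕ, ↥(ConeSet Y j) × (Fin j → X)) →
    (Σ j : ℕ, ↥(ConeSet Y j) × (Fin j → X)) → Prop
  | mk {i j : ℕ} (ν : Fin i → Fin j) (hν : Function.Injective ν)
      (κ : ↥(ConeSet Y j)) (x : Fin i → X) :
      Cone1Rel Y X x₀ ⟨i, ⟨κ.1 ∘ ν, ConeSet.comp κ.2 hν⟩, x⟩
        ⟨j, κ, Function.extend ν x fun _ => x₀⟩

/-- The labeled space of segments `C₁(Y, X)`. -/
def LabeledCone (Y : Type u) (X : Type v) (x₀ : X) : Type (max u v) :=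
  Quot (Cone1Rel Y X x₀)

instance {Y : Type u} {X : Type v} {x₀ : X} [TopologicalSpace Y] [TopologicalSpace X] :
    TopologicalSpace (LabeledCone Y X x₀) :=
  inferInstanceAs (TopologicalSpace (Quot (Cone1Rel Y X x₀)))

/-- `C̄₁(Y,X)` : classes of configurations of segments with endpoints in `(0,1)`. -/
def BarC1Set (Y : Type u) (X : Type v) (x₀ : X) : Set (LabeledCone Y X x₀) :=
  {w | ∃ (j : ℕ) (κ : ↥(ConeSet Y j)) (x : Fin j → X),
    w = Quot.mk _ ⟨j, κ, x⟩ ∧ ∀ i, 0 < (κ.1 i).1 ∧ (κ.1 i).2.1 < 1}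

/-! ### Suspension, cofibrations -/

/-- The relation collapsing `X × {0,1} ∪ {x₀} × I` to a point. -/
def SuspRel (X : Type v) (x₀ : X) : X × I → X × I → Prop := fun p q =>
  (p.2 = 0 ∨ p.2 = 1 ∨ p.1 = x₀) ∧ (q.2 = 0 ∨ q.2 = 1 ∨ q.1 = x₀)

/-- The reduced suspension `ΣX`. -/
def Susp (X : Type v) (x₀ : X) : Type v :=
  Quot (SuspRel X x₀)

instance {X : Type v} {x₀ : X} [TopologicalSpace X] : TopologicalSpace (Susp X x₀) :=
  inferInstanceAs (TopologicalSpace (Quot (SuspRel X x₀)))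

/-- The class `[x, t]` in `ΣX`. -/
def Susp.mk {X : Type v} (x₀ : X) (x : X) (t : I) : Susp X x₀ :=
  Quot.mk _ (x, t)

/-- The basepoint of `ΣX`. -/
def Susp.base {X : Type v} (x₀ : X) : Susp X x₀ :=
  Quot.mk _ (x₀, 0)

/-- A map is a cofibration if it has the homotopy extension property. -/
def IsCofibration {A : Type*} {B : Type v} [TopologicalSpace A] [TopologicalSpace B]
    (φ : C(A, B)) : Prop :=
  ∀ (Z : Type v) (_ : TopologicalSpace Z) (f : C(B, Z)) (H : C(A × I, Z)),
    (∀ a, H (a, 0) = f (φ a)) →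
    ∃ G : C(B × I, Z), (∀ b, G (b, 0) = f b) ∧ ∀ a t, G (φ a, t) = H (a, t)

/-- A based space is nondegenerately based if the inclusion of the basepoint
is a cofibration. -/
def NondegeneratelyBased {X : Type v} [TopologicalSpace X] (x₀ : X) : Prop :=
  IsCofibration ⟨fun _ : Unit => x₀, continuous_const⟩

/-! ### Homotopy equivalences and weak homotopy equivalences -/

/-- A continuous map is a homotopy equivalence if it has a homotopy inverse. -/
def IsHomotopyEquiv {A : Type*} {B : Type*} [TopologicalSpace A] [TopologicalSpace B]
    (f : C(A, B)) : Prop :=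
  ∃ g : C(B, A), (g.comp f).Homotopic (ContinuousMap.id A) ∧
    (f.comp g).Homotopic (ContinuousMap.id B)

/-- The map induced on path components by a continuous map. -/
def zerothHomotopyMap {A : Type*} {B : Type*} [TopologicalSpace A] [TopologicalSpace B]
    (f : C(A, B)) : ZerothHomotopy A → ZerothHomotopy B :=
  Quotient.map f fun _ _ h => ⟨h.somePath.map f.continuous⟩

/-- The map induced on homotopy groups by a continuous map. -/
def homotopyGroupMap {A : Type*} {B : Type*} [TopologicalSpace A] [TopologicalSpace B]
    (f : C(A, B)) (N : Type*) (a : A) :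
    HomotopyGroup N A a → HomotopyGroup N B (f a) :=
  Quotient.map (fun p => ⟨f.comp p.1, fun y hy => by
      simp only [ContinuousMap.comp_apply]
      exact congrArg f (p.2 y hy)⟩)
    fun p q h => h.map fun H => H.compContinuousMap f

/-- A continuous map is a weak homotopy equivalence if it induces a bijection on path
components and isomorphisms on all homotopy groups at every basepoint. -/
def IsWeakHomotopyEquiv {A : Type*} {B : Type*} [TopologicalSpace A] [TopologicalSpace B]
    (f : C(A, B)) : Prop :=
  Function.Bijective (zerothHomotopyMap f) ∧
    ∀ (n : ℕ) (a : A), Function.Bijective (homotopyGroupMap f (Fin n) a)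

theorem castAdd_inj {j k : ℕ} : Function.Injective (Fin.castAdd k : Fin j → Fin (j + k)) :=
  fun a b h => Fin.ext (by simpa using congrArg Fin.val h)

/-- Generators of the relation defining `E₁(Y,X)`: segments entirely above level `s`
may be deleted. -/
inductive E1Rel (Y : Type u) (X : Type v) [TopologicalSpace Y] [TopologicalSpace X] (x₀ : X) :
    ↥(BarC1Set Y X x₀) × I → ↥(BarC1Set Y X x₀) × I → Prop
  | mk {j k : ℕ} (κ : ↥(ConeSet Y (j + k))) (x : Fin (j + k) → X)
      (hb : ∀ i, 0 < (κ.1 i).1 ∧ (κ.1 i).2.1 < 1) (s : I)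
      (hs : ∀ i : Fin k, (s : ℝ) ≤ (κ.1 (Fin.natAdd j i)).1) :
      E1Rel Y X x₀
        (⟨Quot.mk _ ⟨j + k, κ, x⟩, j + k, κ, x, rfl, hb⟩, s)
        (⟨Quot.mk _ ⟨j, ⟨κ.1 ∘ Fin.castAdd k, ConeSet.comp κ.2 castAdd_inj⟩,
            x ∘ Fin.castAdd k⟩,
          j, ⟨κ.1 ∘ Fin.castAdd k, ConeSet.comp κ.2 castAdd_inj⟩, x ∘ Fin.castAdd k, rfl,
          fun i => hb (Fin.castAdd k i)⟩, s)

/-- The space `E₁(Y,X)`. -/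
def E1Space (Y : Type u) (X : Type v) [TopologicalSpace Y] [TopologicalSpace X] (x₀ : X) :
    Type (max u v) :=
  Quot (E1Rel Y X x₀)

instance {Y : Type u} {X : Type v} [TopologicalSpace Y] [TopologicalSpace X] {x₀ : X} :
    TopologicalSpace (E1Space Y X x₀) :=
  inferInstanceAs (TopologicalSpace (Quot (E1Rel Y X x₀)))

/-- The empty cone configuration. -/
def emptyCone (Y : Type u) : ↥(ConeSet Y 0) :=
  ⟨Fin.elim0, fun i => i.elim0, fun k => k.elim0⟩

/-- The empty element of `C̄₁(Y,X)`. -/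
def emptyBarC1 (Y : Type u) (X : Type v) [TopologicalSpace Y] [TopologicalSpace X] (x₀ : X) :
    ↥(BarC1Set Y X x₀) :=
  ⟨Quot.mk _ ⟨0, emptyCone Y, Fin.elim0⟩, 0, emptyCone Y, Fin.elim0, rfl, fun i => i.elim0⟩

theorem labeledCone_zero_eq {Y : Type u} {X : Type v} (x₀ : X)
    (κ : ↥(ConeSet Y 0)) (x : Fin 0 → X) :
    Quot.mk (Cone1Rel Y X x₀) ⟨0, κ, x⟩ = Quot.mk _ ⟨0, emptyCone Y, Fin.elim0⟩ := by
  have hκ : κ = emptyCone Y := Subtype.ext (funext fun i => i.elim0)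
  have hx : x = Fin.elim0 := funext fun i => i.elim0
  rw [hκ, hx]

theorem extend_equiv {X : Type v} {x₀ : X} {i j : ℕ} (e : Fin i ≃ Fin j) (x : Fin j → X) :
    Function.extend (⇑e) (x ∘ ⇑e) (fun _ => x₀) = x := by
  funext b
  obtain ⟨a, rfl⟩ := e.surjective b
  rw [Function.Injective.extend_apply e.injective]
  rfl

/-- Any element of `C̄₁(Y,X)` at level `0` is identified with the empty one. -/
theorem quot_zero {Y : Type u} {X : Type v} [TopologicalSpace Y] [TopologicalSpace X]
    {x₀ : X} (w : ↥(BarC1Set Y X x₀)) :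
    Quot.mk (E1Rel Y X x₀) (w, 0) = Quot.mk _ (emptyBarC1 Y X x₀, 0) := by
  obtain ⟨j, κ, x, hw, hb⟩ := w.2
  set e : Fin (0 + j) ≃ Fin j := finCongr (Nat.zero_add j) with he
  set κ' : ↥(ConeSet Y (0 + j)) :=
    ⟨κ.1 ∘ ⇑e, ConeSet.comp κ.2 e.injective⟩ with hκ'
  have hb' : ∀ i, 0 < (κ'.1 i).1 ∧ (κ'.1 i).2.1 < 1 := fun i => hb (e i)
  have hs' : ∀ i : Fin j, ((0 : I) : ℝ) ≤ (κ'.1 (Fin.natAdd 0 i)).1 :=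
    fun i => le_of_lt (hb' _).1
  have key := Quot.sound (E1Rel.mk (Y := Y) (X := X) (x₀ := x₀) κ' (x ∘ ⇑e) hb' 0 hs')
  have hw1 : w = ⟨Quot.mk _ ⟨0 + j, κ', x ∘ ⇑e⟩,
      0 + j, κ', x ∘ ⇑e, rfl, hb'⟩ := by
    apply Subtype.ext
    rw [hw]
    have := Quot.sound (Cone1Rel.mk (Y := Y) (X := X) (x₀ := x₀) (⇑e) e.injective κ (x ∘ ⇑e))
    rw [extend_equiv e x] at this
    exact this.symm
  rw [hw1, key]
  congr 1
  simp only [Prod.mk.injEq]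
  exact ⟨Subtype.ext (labeledCone_zero_eq x₀ _ _), trivial⟩

/-- The rescaling map on representatives. -/
def Ffun (Y : Type u) (X : Type v) [TopologicalSpace Y] [TopologicalSpace X] (x₀ : X) :
    C((↥(BarC1Set Y X x₀) × I) × I, E1Space Y X x₀) :=
  ⟨fun p => Quot.mk _ (p.1.1, p.2 * p.1.2), by
    apply Continuous.comp continuous_quot_mk
    refine Continuous.prodMk (continuous_fst.comp continuous_fst) ?_
    apply Continuous.subtype_mk
    exact (continuous_subtype_val.comp continuous_snd).mul
      (continuous_subtype_val.comp (continuous_snd.comp continuous_fst))⟩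

theorem Ffun_wd {Y : Type u} {X : Type v} [TopologicalSpace Y] [TopologicalSpace X] (x₀ : X) :
    ∀ a b, E1Rel Y X x₀ a b → (Ffun Y X x₀).curry a = (Ffun Y X x₀).curry b := by
  rintro a b ⟨κ, x, hb, s, hs⟩
  ext t
  exact Quot.sound (E1Rel.mk κ x hb (t * s) fun i =>
    le_trans (by
      have h : ((t * s : I) : ℝ) = (t : ℝ) * (s : ℝ) := rfl
      rw [h]
      exact mul_le_of_le_one_left s.2.1 t.2.2) (hs i))

/-- The contraction homotopy for `E₁(Y,X)`. -/
def Hmap (Y : Type u) (X : Type v) [TopologicalSpace Y] [TopologicalSpace X] (x₀ : X) :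
    C(E1Space Y X x₀ × I, E1Space Y X x₀) :=
  ContinuousMap.uncurry
    ⟨Quot.lift (fun p => (Ffun Y X x₀).curry p) (Ffun_wd x₀),
      continuous_quot_lift _ (Ffun Y X x₀).curry.continuous⟩

theorem Hmap_mk {Y : Type u} {X : Type v} [TopologicalSpace Y] [TopologicalSpace X] (x₀ : X)
    (w : ↥(BarC1Set Y X x₀)) (s t : I) :
    Hmap Y X x₀ (Quot.mk _ (w, s), t) = Quot.mk _ (w, t * s) := by
  have h1 : (⟨Quot.lift (fun p => (Ffun Y X x₀).curry p) (Ffun_wd x₀),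
      continuous_quot_lift _ (Ffun Y X x₀).curry.continuous⟩ :
      C(E1Space Y X x₀, C(I, E1Space Y X x₀))) (Quot.mk _ (w, s))
      = (Ffun Y X x₀).curry (w, s) := rfl
  show ContinuousMap.uncurry _ (Quot.mk _ (w, s), t) = _
  exact (congrArg (fun g : C(I, E1Space Y X x₀) => g t) h1).trans rfl

theorem statement16 {Y : Type u} {X : Type v} [TopologicalSpace Y] [TopologicalSpace X]
    (d : Y → Y → ℝ) (hd : IsWeakMetric d) (x₀ : X) (hX : NondegeneratelyBased x₀) :
    ContractibleSpace (E1Space Y X x₀) := by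
  rw [contractible_iff_id_nullhomotopic]
  refine ⟨Quot.mk _ (emptyBarC1 Y X x₀, 0), ?_⟩
  refine ⟨⟨⟨fun p => Hmap Y X x₀ (p.2, unitInterval.symm p.1), ?_⟩, ?_, ?_⟩⟩
  · exact (Hmap Y X x₀).continuous.comp (continuous_snd.prodMk
      (unitInterval.continuous_symm.comp continuous_fst))
  · intro u
    induction u using Quot.ind with
    | mk p =>
      obtain ⟨w, s⟩ := p
      show Hmap Y X x₀ (Quot.mk _ (w, s), unitInterval.symm 0) = Quot.mk _ (w, s)
      rw [Hmap_mk]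
      have h1 : (unitInterval.symm 0 * s : I) = s := by
        apply Subtype.ext
        show ((unitInterval.symm 0 : I) : ℝ) * (s : ℝ) = (s : ℝ)
        simp
      rw [h1]
  · intro u
    induction u using Quot.ind with
    | mk p =>
      obtain ⟨w, s⟩ := p
      show Hmap Y X x₀ (Quot.mk _ (w, s), unitInterval.symm 1) = Quot.mk _ (emptyBarC1 Y X x₀, 0)
      rw [Hmap_mk]
      have h0 : (unitInterval.symm 1 * s : I) = 0 := by
        apply Subtype.ext
        show ((unitInterval.symm 1 : I) : ℝ) * (s : ℝ) = 0
        simp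
      rw [h0]
      exact quot_zero w

end
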